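/- arXiv:2511.14827 — 3 statements merged into one kernel-verified Lean document; each statement's English description precedes it below -/
import Mathlib

section
/- Let d ≥ 1 and let E : ℝ^d → ℝ be three times continuously differentiable with ∇E, the Hessian ∇²E, and the third derivative ∇³E all bounded on ℝ^d. For η > 0 define E⁺η(x) = E(x) + (η/4)‖∇E(x)‖² and let Φη_t denote the time-t flow map of the ODE ẋ = −∇E⁺η(x). Then there exist C > 0 and η₀ > 0 such that for every η ∈ (0, η₀] and every x ∈ ℝ^d, ‖Φη_η(x) − (x − η∇E(x))‖ ≤ C η³; that is, a single forward-Euler gradient-descent step agrees with the time-η flow of the modified energy up to an error of order η³. -/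
open InnerProductSpace Set

noncomputable section ModAux

variable {F : Type*} [NormedAddCommGroup F] [InnerProductSpace ℝ F] [CompleteSpace F]

local notation "⟪" x ", " y "⟫" => @inner ℝ _ _ x y

noncomputable instance instNACGBilinR : NormedAddCommGroup (F →L[ℝ] F →L[ℝ] ℝ) :=
  ContinuousLinearMap.toNormedAddCommGroup

noncomputable instance instNSBilinR : NormedSpace ℝ (F →L[ℝ] F →L[ℝ] ℝ) :=
  ContinuousLinearMap.toNormedSpace

/-- The inverse of `toDual` over `ℝ`, as a genuine `ℝ`-continuous linear map. -/
def dualIsoR (F : Type*) [NormedAddCommGroup F] [InnerProductSpace ℝ F] [CompleteSpace F] :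
    (F →L[ℝ] ℝ) →L[ℝ] F :=
  LinearMap.mkContinuous
    { toFun := fun ℓ => (toDual ℝ F).symm ℓ
      map_add' := fun a b => by simp
      map_smul' := fun c a => by simp }
    1 (fun ℓ => by simp [LinearIsometryEquiv.norm_map])

@[simp] theorem dualIsoR_apply (ℓ : F →L[ℝ] ℝ) : dualIsoR F ℓ = (toDual ℝ F).symm ℓ := rfl

@[simp] theorem norm_dualIsoR_apply (ℓ : F →L[ℝ] ℝ) : ‖dualIsoR F ℓ‖ = ‖ℓ‖ := by
  simp [LinearIsometryEquiv.norm_map]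

/-- The Hessian of `E` at `x` as a continuous linear map `F →L[ℝ] F`. -/
def hessCLM (E : F → ℝ) (x : F) : F →L[ℝ] F :=
  (dualIsoR F).comp (fderiv ℝ (fderiv ℝ E) x)

variable {E : F → ℝ}

theorem inner_hessCLM (x v w : F) :
    ⟪hessCLM E x v, w⟫ = fderiv ℝ (fderiv ℝ E) x v w := by
  show ⟪(toDual ℝ F).symm _, w⟫ = _
  rw [toDual_symm_apply]; rfl

theorem hasFDerivAt_fderiv (hE : ContDiff ℝ 3 E) (x : F) :
    HasFDerivAt (fderiv ℝ E) (fderiv ℝ (fderiv ℝ E) x) x := by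
  have h2 : ContDiff ℝ 2 (fderiv ℝ E) := hE.fderiv_right (by norm_num)
  exact ((h2.differentiable (by norm_num)) x).hasFDerivAt

theorem hasFDerivAt_gradient (hE : ContDiff ℝ 3 E) (x : F) :
    HasFDerivAt (gradient E) (hessCLM E x) x :=
  (dualIsoR F).hasFDerivAt.comp x (hasFDerivAt_fderiv hE x)

theorem hessCLM_symm (hE : ContDiff ℝ 3 E) (x v w : F) :
    ⟪hessCLM E x v, w⟫ = ⟪hessCLM E x w, v⟫ := by
  rw [inner_hessCLM, inner_hessCLM]
  exact second_derivative_symmetric (f := E)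
    (fun y => ((hE.differentiable (by norm_num)) y).hasFDerivAt)
    (hasFDerivAt_fderiv hE x) v w

theorem norm_fderiv2_eq (x : F) :
    ‖fderiv ℝ (fderiv ℝ E) x‖ = ‖iteratedFDeriv ℝ 2 E x‖ := by
  calc ‖fderiv ℝ (fderiv ℝ E) x‖
      = ‖iteratedFDeriv ℝ 0 (fderiv ℝ (fderiv ℝ E)) x‖ := (norm_iteratedFDeriv_zero).symm
    _ = ‖iteratedFDeriv ℝ 1 (fderiv ℝ E) x‖ := norm_iteratedFDeriv_fderiv
    _ = ‖iteratedFDeriv ℝ 2 E x‖ := norm_iteratedFDeriv_fderiv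

theorem norm_fderiv3_eq (x : F) :
    ‖fderiv ℝ (fderiv ℝ (fderiv ℝ E)) x‖ = ‖iteratedFDeriv ℝ 3 E x‖ := by
  calc ‖fderiv ℝ (fderiv ℝ (fderiv ℝ E)) x‖
      = ‖iteratedFDeriv ℝ 0 (fderiv ℝ (fderiv ℝ (fderiv ℝ E))) x‖ :=
        (norm_iteratedFDeriv_zero).symm
    _ = ‖iteratedFDeriv ℝ 1 (fderiv ℝ (fderiv ℝ E)) x‖ := norm_iteratedFDeriv_fderiv
    _ = ‖iteratedFDeriv ℝ 2 (fderiv ℝ E) x‖ := norm_iteratedFDeriv_fderiv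
    _ = ‖iteratedFDeriv ℝ 3 E x‖ := norm_iteratedFDeriv_fderiv

theorem norm_hessCLM_le (x : F) : ‖hessCLM E x‖ ≤ ‖iteratedFDeriv ℝ 2 E x‖ := by
  rw [← norm_fderiv2_eq]
  refine ContinuousLinearMap.opNorm_le_bound _ (norm_nonneg _) (fun v => ?_)
  show ‖dualIsoR F (fderiv ℝ (fderiv ℝ E) x v)‖ ≤ _
  rw [norm_dualIsoR_apply]
  exact (fderiv ℝ (fderiv ℝ E) x).le_opNorm v

theorem gradient_lip (hE : ContDiff ℝ 3 E) {M : ℝ}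
    (h : ∀ x, ‖iteratedFDeriv ℝ 2 E x‖ ≤ M) (y z : F) :
    ‖gradient E y - gradient E z‖ ≤ M * ‖y - z‖ :=
  convex_univ.norm_image_sub_le_of_norm_hasFDerivWithin_le
    (fun u _ => (hasFDerivAt_gradient hE u).hasFDerivWithinAt)
    (fun u _ => (norm_hessCLM_le u).trans (h u)) (mem_univ z) (mem_univ y)

theorem fderiv2_lip (hE : ContDiff ℝ 3 E) {M : ℝ}
    (h : ∀ x, ‖iteratedFDeriv ℝ 3 E x‖ ≤ M) (y z : F) :
    ‖fderiv ℝ (fderiv ℝ E) y - fderiv ℝ (fderiv ℝ E) z‖ ≤ M * ‖y - z‖ := by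
  have h1 : ContDiff ℝ 1 (fderiv ℝ (fderiv ℝ E)) :=
    (hE.fderiv_right (m := 2) (by norm_num)).fderiv_right (m := 1) (by norm_num)
  exact convex_univ.norm_image_sub_le_of_norm_hasFDerivWithin_le
    (fun u _ => ((h1.differentiable (by norm_num)) u).hasFDerivAt.hasFDerivWithinAt)
    (fun u _ => by rw [norm_fderiv3_eq]; exact h u) (mem_univ z) (mem_univ y)

theorem hessCLM_lip (hE : ContDiff ℝ 3 E) {M : ℝ}
    (h : ∀ x, ‖iteratedFDeriv ℝ 3 E x‖ ≤ M) (y z : F) :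
    ‖hessCLM E y - hessCLM E z‖ ≤ M * ‖y - z‖ := by
  have : hessCLM E y - hessCLM E z
      = (dualIsoR F).comp (fderiv ℝ (fderiv ℝ E) y - fderiv ℝ (fderiv ℝ E) z) := by
    rw [ContinuousLinearMap.comp_sub]; rfl
  rw [this]
  refine le_trans (ContinuousLinearMap.opNorm_le_bound _ (norm_nonneg _) fun v => ?_)
    (fderiv2_lip hE h y z)
  show ‖dualIsoR F (_ : F →L[ℝ] ℝ)‖ ≤ _
  rw [norm_dualIsoR_apply]
  exact ContinuousLinearMap.le_opNorm _ v

theorem continuous_gradient (hE : ContDiff ℝ 3 E) : Continuous (gradient E) :=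
  (dualIsoR F).continuous.comp (hE.continuous_fderiv (by norm_num))

theorem continuous_hessCLM (hE : ContDiff ℝ 3 E) : Continuous (fun y => hessCLM E y) := by
  have hc2 : Continuous (fderiv ℝ (fderiv ℝ E)) :=
    (hE.fderiv_right (m := 2) (by norm_num)).continuous_fderiv (by norm_num)
  exact ((ContinuousLinearMap.compL ℝ F (F →L[ℝ] ℝ) F (dualIsoR F)).continuous.comp hc2)

theorem hasGradientAt_modified (hE : ContDiff ℝ 3 E) (c : ℝ) (x : F) :
    HasGradientAt (fun y => E y + c * ‖gradient E y‖ ^ 2)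
      (gradient E x + (2 * c) • hessCLM E x (gradient E x)) x := by
  have hg := hasFDerivAt_gradient hE x
  have hin := (hg.inner ℝ hg)
  have hE' : HasFDerivAt E (toDual ℝ F (gradient E x)) x :=
    ((hE.differentiable (by norm_num)) x).hasGradientAt.hasFDerivAt
  have hsum := hE'.add (hin.const_mul c)
  rw [hasGradientAt_iff_hasFDerivAt]
  have hfun : (fun y => E y + c * ‖gradient E y‖ ^ 2)
      = fun y => E y + c * (inner ℝ (gradient E y) (gradient E y) : ℝ) := by
    funext y; rw [real_inner_self_eq_norm_sq]
  rw [hfun]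
  convert hsum using 1
  · rfl
  · rfl
  · rfl
  ext v
  simp only [ContinuousLinearMap.add_apply, ContinuousLinearMap.smul_apply,
    ContinuousLinearMap.comp_apply, ContinuousLinearMap.prod_apply, fderivInnerCLM_apply,
    toDual_apply_apply, inner_add_left, real_inner_smul_left]
  have hsymm := hessCLM_symm hE x (gradient E x) v
  rw [real_inner_comm (hessCLM E x v) (gradient E x)] at *
  rw [smul_eq_mul]
  ring_nf
  rw [hsymm]
end ModAux

open MeasureTheory intervalIntegral in
set_option maxHeartbeats 1000000 in
/-- **One-step matching of forward Euler with the modified flow.**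
A single gradient-descent step `x ↦ x − η∇E(x)` agrees with the time-`η` flow of the
modified energy `E⁺η(x) = E(x) + (η/4)‖∇E(x)‖²` up to `O(η³)`. -/
theorem forward_euler_one_step_matching
    (d : ℕ) (hd : 1 ≤ d) (E : EuclideanSpace ℝ (Fin d) → ℝ)
    (hE : ContDiff ℝ 3 E)
    (hgrad : ∃ M : ℝ, ∀ x, ‖gradient E x‖ ≤ M)
    (hhess : ∃ M : ℝ, ∀ x, ‖iteratedFDeriv ℝ 2 E x‖ ≤ M)
    (hthird : ∃ M : ℝ, ∀ x, ‖iteratedFDeriv ℝ 3 E x‖ ≤ M) :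
    ∃ C η₀ : ℝ, 0 < C ∧ 0 < η₀ ∧
      ∀ η : ℝ, η ∈ Set.Ioc (0 : ℝ) η₀ →
        ∀ x : EuclideanSpace ℝ (Fin d),
        ∀ γ : ℝ → EuclideanSpace ℝ (Fin d),
          γ 0 = x →
          (∀ t ∈ Set.Icc (0 : ℝ) η,
            HasDerivAt γ
              (-(gradient (fun y => E y + (η / 4) * ‖gradient E y‖ ^ 2) (γ t))) t) →
          ‖γ η - (x - η • gradient E x)‖ ≤ C * η ^ 3 := by
  classical
  obtain ⟨M₁, hM₁⟩ := hgrad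
  obtain ⟨M₂, hM₂⟩ := hhess
  obtain ⟨M₃, hM₃⟩ := hthird
  set M : ℝ := max 1 (max M₁ (max M₂ M₃)) with hMdef
  have hM1 : (1 : ℝ) ≤ M := le_max_left _ _
  have hMpos : (0 : ℝ) < M := lt_of_lt_of_le one_pos hM1
  have hM₁M : M₁ ≤ M := le_trans (le_max_left _ _) (le_max_right _ _)
  have hM₂M : M₂ ≤ M :=
    le_trans (le_trans (le_max_left _ _) (le_max_right _ _)) (le_max_right _ _)
  have hM₃M : M₃ ≤ M :=
    le_trans (le_trans (le_max_right _ _) (le_max_right _ _)) (le_max_right _ _)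
  have hg : ∀ y, ‖gradient E y‖ ≤ M := fun y => (hM₁ y).trans hM₁M
  have hH : ∀ y, ‖hessCLM E y‖ ≤ M := fun y => (norm_hessCLM_le y).trans ((hM₂ y).trans hM₂M)
  have hglip : ∀ y z, ‖gradient E y - gradient E z‖ ≤ M * ‖y - z‖ :=
    gradient_lip hE (fun u => (hM₂ u).trans hM₂M)
  have hHlip : ∀ y z, ‖hessCLM E y - hessCLM E z‖ ≤ M * ‖y - z‖ :=
    hessCLM_lip hE (fun u => (hM₃ u).trans hM₃M)
  set B : EuclideanSpace ℝ (Fin d) → EuclideanSpace ℝ (Fin d) :=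
    fun y => hessCLM E y (gradient E y) with hBdef
  have hBnorm : ∀ y, ‖B y‖ ≤ M * M := fun y =>
    le_trans (ContinuousLinearMap.le_opNorm _ _)
      (mul_le_mul (hH y) (hg y) (norm_nonneg _) hMpos.le)
  have hBlip : ∀ y z, ‖B y - B z‖ ≤ 2 * M ^ 2 * ‖y - z‖ := by
    intro y z
    have hid : B y - B z
        = (hessCLM E y - hessCLM E z) (gradient E y)
          + (hessCLM E z) (gradient E y - gradient E z) := by
      simp only [hBdef, ContinuousLinearMap.sub_apply, map_sub]
      abel
    rw [hid]
    have e1 : ‖(hessCLM E y - hessCLM E z) (gradient E y)‖ ≤ (M * ‖y - z‖) * M :=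
      le_trans (ContinuousLinearMap.le_opNorm _ _)
        (mul_le_mul (hHlip y z) (hg y) (norm_nonneg _)
          (by positivity))
    have e2 : ‖(hessCLM E z) (gradient E y - gradient E z)‖ ≤ M * (M * ‖y - z‖) :=
      le_trans (ContinuousLinearMap.le_opNorm _ _)
        (mul_le_mul (hH z) (hglip y z) (norm_nonneg _) hMpos.le)
    calc ‖_ + _‖ ≤ (M * ‖y - z‖) * M + M * (M * ‖y - z‖) := norm_add_le_of_le e1 e2
      _ = 2 * M ^ 2 * ‖y - z‖ := by ring
  -- constants
  refine ⟨6 * M ^ 4 + M ^ 3 + 1, 1, by positivity, one_pos, ?_⟩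
  rintro η ⟨hη0, hη1⟩ x γ hγ0 hγ'
  have hgradEq : ∀ y, gradient (fun y => E y + (η / 4) * ‖gradient E y‖ ^ 2) y
      = gradient E y + (η / 2) • B y := by
    intro y
    rw [(hasGradientAt_modified hE (η / 4) y).gradient]
    norm_num [hBdef]
    ring_nf
  set v : ℝ → EuclideanSpace ℝ (Fin d) :=
    fun t => -(gradient E (γ t) + (η / 2) • B (γ t)) with hvdef
  have hγ'' : ∀ t ∈ Set.Icc (0 : ℝ) η, HasDerivAt γ (v t) t := by
    intro t ht
    have := hγ' t ht
    rwa [hgradEq] at this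
  -- continuity
  have hγc : ContinuousOn γ (Set.Icc 0 η) :=
    fun t ht => (hγ'' t ht).continuousAt.continuousWithinAt
  have hgc : Continuous (gradient E) := continuous_gradient hE
  have hBc : Continuous B := (continuous_hessCLM hE).clm_apply hgc
  have hvc : ContinuousOn v (Set.Icc 0 η) := by
    apply ContinuousOn.neg
    exact (hgc.comp_continuousOn hγc).add ((hBc.comp_continuousOn hγc).const_smul (η / 2))
  have hsub : ∀ t ∈ Set.Icc (0 : ℝ) η, Set.Icc (0:ℝ) t ⊆ Set.Icc (0:ℝ) η :=
    fun t ht => Set.Icc_subset_Icc le_rfl ht.2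
  have hioc : ∀ t ∈ Set.Icc (0 : ℝ) η, Set.uIoc (0:ℝ) t ⊆ Set.Icc (0:ℝ) η := by
    intro t ht
    rw [Set.uIoc_of_le ht.1]
    exact fun s hs => ⟨hs.1.le, hs.2.trans ht.2⟩
  have hvInt : ∀ t ∈ Set.Icc (0 : ℝ) η, IntervalIntegrable v volume 0 t := by
    intro t ht
    apply ContinuousOn.intervalIntegrable
    rw [Set.uIcc_of_le ht.1]
    exact hvc.mono (hsub t ht)
  -- bound on the velocity
  have hvnorm : ∀ t ∈ Set.Icc (0 : ℝ) η, ‖v t‖ ≤ 2 * M ^ 2 := by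
    intro t ht
    rw [hvdef]
    simp only [norm_neg]
    have h1 : ‖(η / 2) • B (γ t)‖ ≤ (η / 2) * (M * M) := by
      rw [norm_smul, Real.norm_eq_abs, abs_of_nonneg (by linarith)]
      exact mul_le_mul_of_nonneg_left (hBnorm _) (by linarith)
    have := norm_add_le_of_le (hg (γ t)) h1
    nlinarith [this, hMpos, hM1, hη0, hη1]
  -- displacement bound
  have hFTC : ∀ t ∈ Set.Icc (0 : ℝ) η, ∫ s in (0:ℝ)..t, v s = γ t - x := by
    intro t ht
    rw [← hγ0]
    apply intervalIntegral.integral_eq_sub_of_hasDerivAt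
    · intro s hs
      rw [Set.uIcc_of_le ht.1] at hs
      exact hγ'' s (hsub t ht hs)
    · exact hvInt t ht
  have hdisp : ∀ t ∈ Set.Icc (0 : ℝ) η, ‖γ t - x‖ ≤ 2 * M ^ 2 * t := by
    intro t ht
    rw [← hFTC t ht]
    have := intervalIntegral.norm_integral_le_of_norm_le_const
      (C := 2 * M ^ 2) (f := v) (a := 0) (b := t)
      (fun s hs => hvnorm s (hioc t ht hs))
    rwa [sub_zero, abs_of_nonneg ht.1] at this
  -- FTC for the gradient along the curve
  have hintc : ContinuousOn (fun s => hessCLM E (γ s) (v s)) (Set.Icc 0 η) :=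
    (((continuous_hessCLM hE).comp_continuousOn hγc).clm_apply hvc)
  have hgFTC : ∀ t ∈ Set.Icc (0 : ℝ) η,
      ∫ s in (0:ℝ)..t, hessCLM E (γ s) (v s) = gradient E (γ t) - gradient E x := by
    intro t ht
    rw [← hγ0]
    apply intervalIntegral.integral_eq_sub_of_hasDerivAt
    · intro s hs
      rw [Set.uIcc_of_le ht.1] at hs
      exact (hasFDerivAt_gradient hE (γ s)).comp_hasDerivAt s (hγ'' s (hsub t ht hs))
    · apply ContinuousOn.intervalIntegrable
      rw [Set.uIcc_of_le ht.1]
      exact hintc.mono (hsub t ht)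
  -- pointwise bound on the integrand of the gradient FTC
  have hptwise : ∀ s ∈ Set.Icc (0 : ℝ) η,
      ‖hessCLM E (γ s) (v s) + B x‖ ≤ (4 * M ^ 4 + M ^ 3) * η := by
    intro s hs
    have hid : hessCLM E (γ s) (v s) + B x
        = -(B (γ s) - B x) - (η / 2) • (hessCLM E (γ s)) (B (γ s)) := by
      rw [hvdef]
      simp only [map_neg, map_add, ContinuousLinearMap.map_smul, hBdef]
      abel
    rw [hid]
    have e1 : ‖B (γ s) - B x‖ ≤ 2 * M ^ 2 * (2 * M ^ 2 * s) :=
      le_trans (hBlip _ _) (by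
        have := hdisp s hs
        nlinarith [hMpos])
    have e2 : ‖(η / 2) • (hessCLM E (γ s)) (B (γ s))‖ ≤ (η / 2) * (M * (M * M)) := by
      rw [norm_smul, Real.norm_eq_abs, abs_of_nonneg (by linarith)]
      refine mul_le_mul_of_nonneg_left ?_ (by linarith)
      exact le_trans (ContinuousLinearMap.le_opNorm _ _)
        (mul_le_mul (hH _) (hBnorm _) (norm_nonneg _) hMpos.le)
    calc ‖-(B (γ s) - B x) - (η / 2) • (hessCLM E (γ s)) (B (γ s))‖
        ≤ ‖B (γ s) - B x‖ + ‖(η / 2) • (hessCLM E (γ s)) (B (γ s))‖ := by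
          rw [← norm_neg (B (γ s) - B x)] at *
          exact norm_sub_le _ _
      _ ≤ 2 * M ^ 2 * (2 * M ^ 2 * s) + (η / 2) * (M * (M * M)) := add_le_add e1 e2
      _ ≤ (4 * M ^ 4 + M ^ 3) * η := by
          have e3 : 4 * M ^ 4 * s ≤ 4 * M ^ 4 * η :=
            mul_le_mul_of_nonneg_left hs.2 (by positivity)
          have e4 : (0:ℝ) ≤ M ^ 3 * η := by positivity
          nlinarith [e3, e4]
  -- key estimate
  have hkey : ∀ t ∈ Set.Icc (0 : ℝ) η,
      ‖v t + gradient E x - (t - η / 2) • B x‖ ≤ (6 * M ^ 4 + M ^ 3) * η ^ 2 := by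
    intro t ht
    have h1 : ‖gradient E (γ t) - gradient E x + t • B x‖ ≤ (4 * M ^ 4 + M ^ 3) * η * η := by
      have hconst : ∫ s in (0:ℝ)..t, B x = t • B x := by
        simp [intervalIntegral.integral_const]
      have hsplit : gradient E (γ t) - gradient E x + t • B x
          = ∫ s in (0:ℝ)..t, (hessCLM E (γ s) (v s) + B x) := by
        rw [intervalIntegral.integral_add]
        · rw [hgFTC t ht, hconst]
        · apply ContinuousOn.intervalIntegrable
          rw [Set.uIcc_of_le ht.1]
          exact hintc.mono (hsub t ht)
        · exact intervalIntegrable_const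
      rw [hsplit]
      have := intervalIntegral.norm_integral_le_of_norm_le_const
        (C := (4 * M ^ 4 + M ^ 3) * η)
        (f := fun s => hessCLM E (γ s) (v s) + B x) (a := 0) (b := t)
        (fun s hs => hptwise s (hioc t ht hs))
      rw [sub_zero, abs_of_nonneg ht.1] at this
      refine this.trans ?_
      have hc : (0:ℝ) ≤ (4 * M ^ 4 + M ^ 3) * η := by positivity
      nlinarith [ht.2, hc]
    have h2 : ‖B (γ t) - B x‖ ≤ 2 * M ^ 2 * (2 * M ^ 2 * η) := by
      refine le_trans (hBlip _ _) ?_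
      have hb : ‖γ t - x‖ ≤ 2 * M ^ 2 * η :=
        (hdisp t ht).trans (mul_le_mul_of_nonneg_left ht.2 (by positivity))
      exact mul_le_mul_of_nonneg_left hb (by positivity)
    have hid : v t + gradient E x - (t - η / 2) • B x
        = -(gradient E (γ t) - gradient E x + t • B x) - (η / 2) • (B (γ t) - B x) := by
      rw [hvdef]
      module
    rw [hid]
    calc ‖-(gradient E (γ t) - gradient E x + t • B x) - (η / 2) • (B (γ t) - B x)‖
        ≤ ‖gradient E (γ t) - gradient E x + t • B x‖ + (η / 2) * ‖B (γ t) - B x‖ := by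
          refine le_trans (norm_sub_le _ _) ?_
          rw [norm_neg, norm_smul, Real.norm_eq_abs, abs_of_nonneg (by linarith)]
      _ ≤ (4 * M ^ 4 + M ^ 3) * η * η + (η / 2) * (2 * M ^ 2 * (2 * M ^ 2 * η)) := by
          refine add_le_add h1 (mul_le_mul_of_nonneg_left h2 (by linarith))
      _ ≤ (6 * M ^ 4 + M ^ 3) * η ^ 2 := by nlinarith [hMpos, hη0]
  -- final assembly
  have hηIcc : η ∈ Set.Icc (0:ℝ) η := ⟨hη0.le, le_rfl⟩
  have hIB : ∫ t in (0:ℝ)..η, (t - η / 2) • B x = 0 := by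
    rw [intervalIntegral.integral_smul_const]
    have : ∫ t in (0:ℝ)..η, (t - η / 2) = 0 := by
      rw [intervalIntegral.integral_sub (intervalIntegrable_id) intervalIntegrable_const]
      simp [integral_id]
      ring
    rw [this, zero_smul]
  have hIc : ∫ _ in (0:ℝ)..η, gradient E x = η • gradient E x := by
    simp [intervalIntegral.integral_const]
  have hsplit : γ η - (x - η • gradient E x)
      = ∫ t in (0:ℝ)..η, (v t + gradient E x - (t - η / 2) • B x) := by
    rw [intervalIntegral.integral_sub, intervalIntegral.integral_add]
    · rw [hFTC η hηIcc, hIc, hIB]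
      abel
    · exact hvInt η hηIcc
    · exact intervalIntegrable_const
    · exact (hvInt η hηIcc).add intervalIntegrable_const
    · exact (Continuous.intervalIntegrable (by fun_prop) 0 η)
  rw [hsplit]
  have := intervalIntegral.norm_integral_le_of_norm_le_const
    (C := (6 * M ^ 4 + M ^ 3) * η ^ 2)
    (f := fun t => v t + gradient E x - (t - η / 2) • B x) (a := 0) (b := η)
    (fun t ht => hkey t (hioc η hηIcc ht))
  rw [sub_zero, abs_of_nonneg hη0.le] at this
  refine this.trans ?_
  nlinarith [hMpos, hη0]
end

section
/- Let d ≥ 1, let A be a real d × d matrix, and let μ₀ ∈ ℝ^d. For η > 0 small enough that I − ηA is invertible, define the JKO mean update μ_JKO(η) = (I − ηA)^{-1} μ₀ and the second-order modified flow value μ(η) = exp(ηA + (η²/2)A²) μ₀, where exp is the matrix exponential. Then ‖μ(η) − μ_JKO(η)‖ = O(η³) as η → 0⁺; that is, the solution of the corrected mean dynamics μ̇ = Aμ + (η/2)A²μ matches the analytic JKO mean update to third order in η. -/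
open NormedSpace

lemma fact_ge (i : ℕ) : 6 * 2 ^ i ≤ Nat.factorial (i + 3) := by
  induction i with
  | zero => simp [Nat.factorial]
  | succ n ih =>
      have h1 : Nat.factorial (n + 1 + 3) = (n + 1 + 3) * Nat.factorial (n + 3) := by
        rw [show n + 1 + 3 = (n + 3) + 1 by omega, Nat.factorial_succ]
      have h2 : 6 * 2 ^ (n + 1) = 2 * (6 * 2 ^ n) := by ring
      have h4 : 2 * Nat.factorial (n + 3) ≤ (n + 1 + 3) * Nat.factorial (n + 3) :=
        Nat.mul_le_mul_right _ (by omega)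
      omega

lemma exp_cubic_remainder {𝔸 : Type*} [NormedRing 𝔸] [NormedAlgebra ℝ 𝔸] [CompleteSpace 𝔸]
    (x : 𝔸) (hx : ‖x‖ ≤ 1) :
    ‖exp x - (1 + x + (2⁻¹ : ℝ) • (x * x))‖ ≤ ‖x‖ ^ 3 := by
  have hsum : Summable fun n : ℕ => ((Nat.factorial n : ℝ)⁻¹) • x ^ n := expSeries_summable' x
  have h3 := Summable.sum_add_tsum_nat_add 3 hsum
  have hexp : exp x = ∑' n : ℕ, ((Nat.factorial n : ℝ)⁻¹) • x ^ n := by rw [exp_eq_tsum ℝ]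
  have hpart : ∑ i ∈ Finset.range 3, ((Nat.factorial i : ℝ)⁻¹) • x ^ i
      = 1 + x + (2⁻¹ : ℝ) • (x * x) := by
    simp [Finset.sum_range_succ, Nat.factorial, pow_succ]
  have hrw : exp x - (1 + x + (2⁻¹ : ℝ) • (x * x))
      = ∑' i : ℕ, ((Nat.factorial (i + 3) : ℝ)⁻¹) • x ^ (i + 3) := by
    rw [hexp, ← h3, hpart]; abel
  rw [hrw]
  have hg0 : HasSum (fun i : ℕ => (2⁻¹ : ℝ) ^ i) 2 := by
    have h := hasSum_geometric_of_lt_one (r := (2⁻¹ : ℝ)) (by norm_num) (by norm_num)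
    norm_num at h
    simpa [one_div] using h
  have hg : HasSum (fun i : ℕ => ‖x‖ ^ 3 * 6⁻¹ * (2⁻¹ : ℝ) ^ i) (‖x‖ ^ 3 * 6⁻¹ * 2) :=
    hg0.mul_left _
  have hbound : ∀ i : ℕ, ‖((Nat.factorial (i + 3) : ℝ)⁻¹) • x ^ (i + 3)‖
      ≤ ‖x‖ ^ 3 * 6⁻¹ * (2⁻¹ : ℝ) ^ i := by
    intro i
    have h1 : ‖((Nat.factorial (i + 3) : ℝ)⁻¹) • x ^ (i + 3)‖
        = (Nat.factorial (i + 3) : ℝ)⁻¹ * ‖x ^ (i + 3)‖ := by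
      rw [norm_smul, Real.norm_eq_abs, abs_of_nonneg (by positivity)]
    rw [h1]
    have h2 : ‖x ^ (i + 3)‖ ≤ ‖x‖ ^ 3 := by
      calc ‖x ^ (i + 3)‖ ≤ ‖x‖ ^ (i + 3) := norm_pow_le' x (by omega)
        _ = ‖x‖ ^ 3 * ‖x‖ ^ i := by ring
        _ ≤ ‖x‖ ^ 3 * 1 := by
            exact mul_le_mul_of_nonneg_left (pow_le_one₀ (norm_nonneg x) hx) (by positivity)
        _ = ‖x‖ ^ 3 := by ring
    have h4 : (Nat.factorial (i + 3) : ℝ)⁻¹ ≤ 6⁻¹ * (2⁻¹ : ℝ) ^ i := by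
      have := fact_ge i
      have h6 : (6 : ℝ) * 2 ^ i ≤ (Nat.factorial (i + 3) : ℝ) := by exact_mod_cast this
      rw [inv_pow]
      rw [← mul_inv]
      apply inv_anti₀ (by positivity)
      exact h6
    calc (Nat.factorial (i + 3) : ℝ)⁻¹ * ‖x ^ (i + 3)‖
        ≤ (6⁻¹ * (2⁻¹ : ℝ) ^ i) * ‖x‖ ^ 3 := by
          exact mul_le_mul h4 h2 (norm_nonneg _) (by positivity)
      _ = ‖x‖ ^ 3 * 6⁻¹ * (2⁻¹ : ℝ) ^ i := by ring
  calc ‖∑' i : ℕ, ((Nat.factorial (i + 3) : ℝ)⁻¹) • x ^ (i + 3)‖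
      ≤ ‖x‖ ^ 3 * 6⁻¹ * 2 := tsum_of_norm_bounded hg hbound
    _ ≤ ‖x‖ ^ 3 := by nlinarith [pow_nonneg (norm_nonneg x) 3]

set_option maxHeartbeats 1000000 in
/-- **Second-order matching of the JKO mean update in Bures–Wasserstein space.**
For the linear Fokker–Planck equation with drift `A`, the analytic JKO mean update
`μ_JKO(η) = (I − ηA)⁻¹μ₀` is matched to `O(η³)` by the second-order modified flow
`μ(η) = exp(ηA + (η²/2)A²)μ₀`. -/
theorem jko_mean_second_order_matching
    (d : ℕ) (hd : 1 ≤ d) (A : Matrix (Fin d) (Fin d) ℝ)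
    (μ₀ : EuclideanSpace ℝ (Fin d)) :
    ∃ K η₀ : ℝ, 0 < K ∧ 0 < η₀ ∧ ∀ η ∈ Set.Ioc (0 : ℝ) η₀,
      IsUnit ((1 : Matrix (Fin d) (Fin d) ℝ) - η • A) ∧
      ‖Matrix.toEuclideanLin (exp (η • A + (η ^ 2 / 2) • (A * A))) μ₀
          - Matrix.toEuclideanLin ((1 : Matrix (Fin d) (Fin d) ℝ) - η • A)⁻¹ μ₀‖
        ≤ K * η ^ 3 := by
  classical
  letI : NormedRing (Matrix (Fin d) (Fin d) ℝ) := Matrix.instL2OpNormedRing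
  letI : NormedAlgebra ℝ (Matrix (Fin d) (Fin d) ℝ) := Matrix.instL2OpNormedAlgebra
  letI : CompleteSpace (Matrix (Fin d) (Fin d) ℝ) := FiniteDimensional.complete ℝ _
  obtain ⟨a, ha⟩ : ∃ a : ℝ, a = ‖A‖ + 1 := ⟨_, rfl⟩
  have hA : ‖A‖ ≤ a := by simp [ha]
  have ha0 : (0:ℝ) < a := by
    have := norm_nonneg A
    rw [ha]; linarith
  refine ⟨30 * a ^ 3 * (‖μ₀‖ + 1), min 1 (1 / (2 * a)), by positivity, by positivity, ?_⟩
  rintro η ⟨hη0, hη1⟩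
  have hηle1 : η ≤ 1 := le_trans hη1 (min_le_left _ _)
  have hηa : η * a ≤ 1 / 2 := by
    have h := le_trans hη1 (min_le_right _ _)
    rw [le_div_iff₀ (by positivity)] at h
    nlinarith
  obtain ⟨s, hsdef⟩ : ∃ s' : Matrix (Fin d) (Fin d) ℝ, s' = η • A := ⟨_, rfl⟩
  have hsnorm : ‖s‖ ≤ η * a := by
    rw [hsdef, norm_smul, Real.norm_eq_abs, abs_of_pos hη0]
    exact mul_le_mul_of_nonneg_left hA hη0.le
  have hsnn : (0:ℝ) ≤ ‖s‖ := norm_nonneg _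
  have hs_half : ‖s‖ ≤ 1 / 2 := le_trans hsnorm hηa
  have hs1 : ‖s‖ < 1 := lt_of_le_of_lt hs_half (by norm_num)
  have hUnit : IsUnit ((1 : Matrix (Fin d) (Fin d) ℝ) - s) := isUnit_one_sub_of_norm_lt_one hs1
  rw [← hsdef]
  refine ⟨hUnit, ?_⟩
  -- the inverse and its norm bound
  have hinv_eq : ((1 : Matrix (Fin d) (Fin d) ℝ) - s)⁻¹ = Ring.inverse (1 - s) :=
    Matrix.nonsing_inv_eq_ringInverse _
  have hone : ‖(1 : Matrix (Fin d) (Fin d) ℝ)‖ ≤ 1 := by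
    rw [Matrix.cstar_norm_def, map_one, ContinuousLinearMap.one_def]
    exact ContinuousLinearMap.norm_id_le
  have hinvnorm : ‖Ring.inverse ((1 : Matrix (Fin d) (Fin d) ℝ) - s)‖ ≤ 2 := by
    rw [← geom_series_eq_inverse s hs1]
    have h1 := tsum_geometric_le_of_norm_lt_one s hs1
    have h2 : (1 - ‖s‖)⁻¹ ≤ 2 := by
      rw [inv_le_comm₀ (by linarith) (by norm_num)]
      linarith
    linarith
  -- the quadratic drift
  obtain ⟨B, hBdef⟩ : ∃ B' : Matrix (Fin d) (Fin d) ℝ, B' = s + (2⁻¹ : ℝ) • (s * s) := ⟨_, rfl⟩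
  have hBeq : s + (η ^ 2 / 2) • (A * A) = B := by
    rw [hBdef, hsdef, smul_mul_smul_comm, smul_smul]
    congr 1
    ring
  have hBnorm : ‖B‖ ≤ 2 * ‖s‖ := by
    calc ‖B‖ = ‖s + (2⁻¹ : ℝ) • (s * s)‖ := by rw [hBdef]
      _ ≤ ‖s‖ + ‖(2⁻¹ : ℝ) • (s * s)‖ := norm_add_le _ _
      _ ≤ ‖s‖ + 2⁻¹ * (‖s‖ * ‖s‖) := by
          rw [norm_smul, Real.norm_eq_abs, show |(2⁻¹:ℝ)| = 2⁻¹ by norm_num]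
          have := norm_mul_le s s
          nlinarith
      _ ≤ 2 * ‖s‖ := by nlinarith
  have hB1 : ‖B‖ ≤ 1 := by nlinarith
  have hBnn : (0:ℝ) ≤ ‖B‖ := norm_nonneg _
  -- the exp remainder
  obtain ⟨r, hrdef⟩ : ∃ r' : Matrix (Fin d) (Fin d) ℝ,
      r' = exp B - (1 + B + (2⁻¹ : ℝ) • (B * B)) := ⟨_, rfl⟩
  have hrnorm : ‖r‖ ≤ ‖B‖ ^ 3 := by rw [hrdef]; exact exp_cubic_remainder B hB1
  have hexp_eq : exp B = 1 + B + (2⁻¹ : ℝ) • (B * B) + r := by rw [hrdef]; abel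
  -- key algebraic identity
  have hN : exp B * (1 - s) - 1
      = (8⁻¹ : ℝ) • (s * s * (s * s)) - (2⁻¹ : ℝ) • (B * B * s) + r * (1 - s) := by
    rw [hexp_eq, hBdef]
    simp only [mul_add, add_mul, mul_sub, sub_mul, smul_mul_assoc, mul_smul_comm, smul_smul,
      one_mul, mul_one, mul_assoc]
    module
  -- norm bound on the numerator
  have hNnorm : ‖exp B * (1 - s) - 1‖ ≤ 15 * ‖s‖ ^ 3 := by
    rw [hN]
    have h1 : ‖s * s * (s * s)‖ ≤ ‖s‖ ^ 4 := by
      calc ‖s * s * (s * s)‖ ≤ ‖s * s‖ * ‖s * s‖ := norm_mul_le _ _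
        _ ≤ (‖s‖ * ‖s‖) * (‖s‖ * ‖s‖) :=
            mul_le_mul (norm_mul_le s s) (norm_mul_le s s) (norm_nonneg _) (by positivity)
        _ = ‖s‖ ^ 4 := by ring
    have h2 : ‖B * B * s‖ ≤ (2 * ‖s‖) ^ 2 * ‖s‖ := by
      calc ‖B * B * s‖ ≤ ‖B * B‖ * ‖s‖ := norm_mul_le _ _
        _ ≤ (‖B‖ * ‖B‖) * ‖s‖ :=
            mul_le_mul_of_nonneg_right (norm_mul_le B B) hsnn
        _ ≤ ((2 * ‖s‖) * (2 * ‖s‖)) * ‖s‖ := by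
            have := mul_le_mul hBnorm hBnorm hBnn (by positivity : (0:ℝ) ≤ 2 * ‖s‖)
            nlinarith
        _ = (2 * ‖s‖) ^ 2 * ‖s‖ := by ring
    have h3 : ‖r * (1 - s)‖ ≤ (2 * ‖s‖) ^ 3 * (3 / 2) := by
      have hmul := norm_mul_le r ((1 : Matrix (Fin d) (Fin d) ℝ) - s)
      have h4 : ‖(1 : Matrix (Fin d) (Fin d) ℝ) - s‖ ≤ 3 / 2 := by
        have := norm_sub_le (1 : Matrix (Fin d) (Fin d) ℝ) s
        linarith
      have h5 : ‖r‖ ≤ (2 * ‖s‖) ^ 3 := by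
        calc ‖r‖ ≤ ‖B‖ ^ 3 := hrnorm
          _ ≤ (2 * ‖s‖) ^ 3 := pow_le_pow_left₀ hBnn hBnorm 3
      have hrnn := norm_nonneg r
      have h6 : (0:ℝ) ≤ (2 * ‖s‖) ^ 3 := by positivity
      nlinarith
    have e1 : ‖(8⁻¹ : ℝ) • (s * s * (s * s))‖ = 8⁻¹ * ‖s * s * (s * s)‖ := by
      rw [norm_smul, Real.norm_eq_abs, show |(8⁻¹:ℝ)| = 8⁻¹ by norm_num]
    have e2 : ‖(2⁻¹ : ℝ) • (B * B * s)‖ = 2⁻¹ * ‖B * B * s‖ := by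
      rw [norm_smul, Real.norm_eq_abs, show |(2⁻¹:ℝ)| = 2⁻¹ by norm_num]
    calc ‖(8⁻¹ : ℝ) • (s * s * (s * s)) - (2⁻¹ : ℝ) • (B * B * s) + r * (1 - s)‖
        ≤ ‖(8⁻¹ : ℝ) • (s * s * (s * s)) - (2⁻¹ : ℝ) • (B * B * s)‖ + ‖r * (1 - s)‖ :=
          norm_add_le _ _
      _ ≤ ‖(8⁻¹ : ℝ) • (s * s * (s * s))‖ + ‖(2⁻¹ : ℝ) • (B * B * s)‖ + ‖r * (1 - s)‖ := by
          have := norm_sub_le ((8⁻¹ : ℝ) • (s * s * (s * s))) ((2⁻¹ : ℝ) • (B * B * s))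
          linarith
      _ ≤ 8⁻¹ * ‖s‖ ^ 4 + 2⁻¹ * ((2 * ‖s‖) ^ 2 * ‖s‖) + (2 * ‖s‖) ^ 3 * (3 / 2) := by
          rw [e1, e2]
          linarith
      _ ≤ 15 * ‖s‖ ^ 3 := by nlinarith [pow_nonneg hsnn 3, pow_nonneg hsnn 4]
  -- difference factorization
  have hcancel : ((1 : Matrix (Fin d) (Fin d) ℝ) - s) * Ring.inverse (1 - s) = 1 :=
    Ring.mul_inverse_cancel _ hUnit
  have hfact : exp B - Ring.inverse ((1 : Matrix (Fin d) (Fin d) ℝ) - s)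
      = (exp B * (1 - s) - 1) * Ring.inverse (1 - s) := by
    rw [sub_mul, mul_assoc, hcancel, mul_one, one_mul]
  have hmatdiff : ‖exp B - Ring.inverse ((1 : Matrix (Fin d) (Fin d) ℝ) - s)‖
      ≤ 30 * (η * a) ^ 3 := by
    rw [hfact]
    have := norm_mul_le (exp B * (1 - s) - 1)
      (Ring.inverse ((1 : Matrix (Fin d) (Fin d) ℝ) - s))
    have hs3 : ‖s‖ ^ 3 ≤ (η * a) ^ 3 := pow_le_pow_left₀ hsnn hsnorm 3
    have hN0 : (0:ℝ) ≤ ‖exp B * (1 - s) - 1‖ := norm_nonneg _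
    nlinarith
  -- transfer to vectors
  have hvec : ∀ M : Matrix (Fin d) (Fin d) ℝ,
      ‖Matrix.toEuclideanLin M μ₀‖ ≤ ‖M‖ * ‖μ₀‖ := by
    intro M
    have h := ContinuousLinearMap.le_opNorm
      ((Matrix.toEuclideanLin.trans LinearMap.toContinuousLinearMap) M) μ₀
    rw [Matrix.l2_opNorm_def]
    exact h
  rw [hBeq, hinv_eq]
  have hdiff : Matrix.toEuclideanLin (exp B) μ₀
      - Matrix.toEuclideanLin (Ring.inverse ((1 : Matrix (Fin d) (Fin d) ℝ) - s)) μ₀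
      = Matrix.toEuclideanLin
          (exp B - Ring.inverse ((1 : Matrix (Fin d) (Fin d) ℝ) - s)) μ₀ := by
    rw [map_sub]
    rfl
  rw [hdiff]
  calc ‖Matrix.toEuclideanLin
          (exp B - Ring.inverse ((1 : Matrix (Fin d) (Fin d) ℝ) - s)) μ₀‖
      ≤ ‖exp B - Ring.inverse ((1 : Matrix (Fin d) (Fin d) ℝ) - s)‖ * ‖μ₀‖ := hvec _
    _ ≤ 30 * (η * a) ^ 3 * ‖μ₀‖ := by
        have := norm_nonneg μ₀
        nlinarith [hmatdiff]
    _ ≤ 30 * a ^ 3 * (‖μ₀‖ + 1) * η ^ 3 := by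
        have h1 : (0:ℝ) ≤ ‖μ₀‖ := norm_nonneg μ₀
        nlinarith [pow_pos hη0 3, pow_pos ha0 3]
end

section
/- Let h > 0 and η > 0, and define T : ℝ → ℝ by T(x) = x − h( x³ − (3η/2) x⁵ ) = x − h x³ + (3hη/2) x⁵. Then T is monotone nondecreasing on ℝ (equivalently, T′(x) = 1 − 3h x² + (15hη/2) x⁴ ≥ 0 for all x ∈ ℝ) if and only if η ≥ 3h/10. -/
private lemma deriv_nonneg_iff_aux (h η : ℝ) (hh : 0 < h) (hη : 0 < η) :
    (∀ x : ℝ, 0 ≤ 1 - 3 * h * x ^ 2 + (15 * h * η / 2) * x ^ 4) ↔ 3 * h / 10 ≤ η := by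
  constructor
  · intro H
    have hx := H (Real.sqrt (1 / (5 * η)))
    have h5 : (0:ℝ) < 5 * η := by linarith
    have hsq : Real.sqrt (1 / (5 * η)) ^ 2 = 1 / (5 * η) := by
      rw [Real.sq_sqrt]; positivity
    have hsq4 : Real.sqrt (1 / (5 * η)) ^ 4 = (1 / (5 * η)) ^ 2 := by
      rw [show Real.sqrt (1 / (5 * η)) ^ 4 = (Real.sqrt (1 / (5 * η)) ^ 2) ^ 2 by ring, hsq]
    rw [hsq, hsq4] at hx
    have h5' : (5 * η) ≠ 0 := ne_of_gt h5
    field_simp at hx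
    linarith
  · intro H x
    nlinarith [sq_nonneg (2 - 3 * h * x ^ 2), sq_nonneg (x ^ 2), mul_nonneg (mul_nonneg hh.le (sub_nonneg.mpr H)) (sq_nonneg (x ^ 2))]

private lemma hasDerivAt_aux (h η x : ℝ) :
    HasDerivAt (fun x : ℝ => x - h * (x ^ 3 - (3 * η / 2) * x ^ 5))
      (1 - 3 * h * x ^ 2 + (15 * h * η / 2) * x ^ 4) x := by
  have h1 : HasDerivAt (fun x : ℝ => x - h * (x ^ 3 - (3 * η / 2) * x ^ 5))
      (1 - h * (3 * x ^ 2 - (3 * η / 2) * (5 * x ^ 4))) x := by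
    have hx : HasDerivAt (fun x : ℝ => x) 1 x := hasDerivAt_id x
    have h3 : HasDerivAt (fun x : ℝ => x ^ 3) (3 * x ^ 2) x := by
      simpa using hasDerivAt_pow 3 x
    have h5 : HasDerivAt (fun x : ℝ => x ^ 5) (5 * x ^ 4) x := by
      simpa using hasDerivAt_pow 5 x
    exact hx.sub (((h3.sub (h5.const_mul (3 * η / 2))).const_mul h))
  convert h1 using 1; ring

private lemma nonneg_of_monotone {f : ℝ → ℝ} {f' x : ℝ} (hf : Monotone f)
    (hd : HasDerivAt f f' x) : 0 ≤ f' := by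
  have ht := hasDerivAt_iff_tendsto_slope.mp hd
  refine ge_of_tendsto ht ?_
  filter_upwards [self_mem_nhdsWithin] with y hy
  have hyx : y ≠ x := hy
  rw [slope_def_field]
  rcases hyx.lt_or_gt with hlt | hlt
  · have h1 : f y ≤ f x := hf hlt.le
    have h2 : y - x < 0 := by linarith
    rw [div_nonneg_iff]
    exact Or.inr ⟨by linarith, h2.le⟩
  · have h1 : f x ≤ f y := hf hlt.le
    exact div_nonneg (by linarith) (by linarith)

/-- **Monotonicity criterion for the JKO-corrected transport map.**
For `h, η > 0`, the map `T(x) = x − h(x³ − (3η/2)x⁵)` is monotone nondecreasing on `ℝ`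
(equivalently `T′(x) = 1 − 3hx² + (15hη/2)x⁴ ≥ 0` for all `x`) if and only if
`η ≥ 3h/10`. -/
theorem jko_corrected_transport_monotone_iff (h η : ℝ) (hh : 0 < h) (hη : 0 < η) :
    (Monotone (fun x : ℝ => x - h * (x ^ 3 - (3 * η / 2) * x ^ 5)) ↔ 3 * h / 10 ≤ η) ∧
    ((∀ x : ℝ, 0 ≤ 1 - 3 * h * x ^ 2 + (15 * h * η / 2) * x ^ 4) ↔ 3 * h / 10 ≤ η) := by
  have key := deriv_nonneg_iff_aux h η hh hη
  refine ⟨?_, key⟩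
  rw [← key]
  constructor
  · intro hmono x
    exact nonneg_of_monotone hmono (hasDerivAt_aux h η x)
  · intro H
    apply monotone_of_deriv_nonneg
    · exact fun x => (hasDerivAt_aux h η x).differentiableAt
    · intro x
      rw [(hasDerivAt_aux h η x).deriv]
      exact H x
end
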